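/- Let R be a ring of prime characteristic p, let I be a nil ideal of R, and suppose every element of R/I is a sum of at most k periodic elements. Then every element of R is a sum of at most k + 1 periodic elements. -/

import Mathlib

/-- An element of a ring is periodic if `x ^ n = x ^ m` for some `n > m ≥ 1`. -/
def IsPeriodicElem {R : Type*} [Ring R] (x : R) : Prop :=
  ∃ n m : ℕ, 1 ≤ m ∧ m < n ∧ x ^ n = x ^ m

lemma nilpotent_isPeriodic {R : Type*} [Ring R] {x : R} (h : IsNilpotent x) :
    IsPeriodicElem x := by
  obtain ⟨c, hc⟩ := h
  refine ⟨c + 2, c + 1, le_add_self, by omega, ?_⟩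
  have h1 : x ^ (c + 1) = 0 := by rw [pow_succ, hc, zero_mul]
  rw [h1, pow_succ, h1, zero_mul]

lemma periodic_lift {R S : Type*} [Ring R] [Ring S]
    (p : ℕ) (hp : p.Prime) (hchar : CharP R p)
    (f : R →+* S) (hnil : ∀ x : R, f x = 0 → IsNilpotent x)
    {a : R} (h : IsPeriodicElem (f a)) : IsPeriodicElem a := by
  haveI : Fact p.Prime := ⟨hp⟩
  obtain ⟨n, m, hm, hmn, he⟩ := h
  have : f (a ^ n - a ^ m) = 0 := by simp [he]
  obtain ⟨c, hc⟩ := hnil _ this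
  have hcle : c ≤ p ^ c := Nat.le_of_lt (Nat.lt_pow_self hp.one_lt : c < p ^ c)
  have hz : (a ^ n - a ^ m) ^ p ^ c = 0 := pow_eq_zero_of_le hcle hc
  rw [sub_pow_char_pow_of_commute p c (Commute.pow_pow_self a n m)] at hz
  have hz' : (a ^ n) ^ p ^ c = (a ^ m) ^ p ^ c := sub_eq_zero.mp hz
  exact ⟨n * p ^ c, m * p ^ c, Nat.mul_pos hm (pow_pos hp.pos c),
    (Nat.mul_lt_mul_right (pow_pos hp.pos c)).mpr hmn, by rw [pow_mul, pow_mul, hz']⟩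

theorem additively_k_periodic_lifts {R S : Type*} [Ring R] [Ring S]
    (p : ℕ) (hp : p.Prime) (hchar : CharP R p)
    (f : R →+* S) (hsurj : Function.Surjective f)
    (hnil : ∀ x : R, f x = 0 → IsNilpotent x) (k : ℕ)
    (h : ∀ b : S, ∃ l : List S, l.length ≤ k ∧ (∀ x ∈ l, IsPeriodicElem x) ∧ l.sum = b) :
    ∀ a : R, ∃ l : List R, l.length ≤ k + 1 ∧ (∀ x ∈ l, IsPeriodicElem x) ∧ l.sum = a := by
  intro a
  obtain ⟨l, hlen, hper, hsum⟩ := h (f a)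
  -- lift the list
  have lift : ∀ (l : List S), (∀ x ∈ l, IsPeriodicElem x) →
      ∃ l' : List R, l'.length = l.length ∧ (∀ x ∈ l', IsPeriodicElem x) ∧ f l'.sum = l.sum := by
    intro l
    induction l with
    | nil => exact fun _ => ⟨[], rfl, by simp, by simp⟩
    | cons s t ih =>
      intro hl
      obtain ⟨t', h1, h2, h3⟩ := ih fun x hx => hl x (List.mem_cons_of_mem _ hx)
      obtain ⟨r, hr⟩ := hsurj s
      refine ⟨r :: t', by simp [h1], ?_, by simp [h3, hr]⟩
      intro x hx
      rcases List.mem_cons.mp hx with rfl | hx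
      · exact periodic_lift p hp hchar f hnil (hr ▸ hl s List.mem_cons_self)
      · exact h2 x hx
  obtain ⟨l', h1, h2, h3⟩ := lift l hper
  refine ⟨l' ++ [a - l'.sum], by simp [h1]; omega, ?_, by simp⟩
  intro x hx
  rcases List.mem_append.mp hx with hx | hx
  · exact h2 x hx
  · simp at hx
    subst hx
    exact nilpotent_isPeriodic (hnil _ (by simp [h3, hsum]))
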